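/- Let N ≥ 1 and let (h_n) be a sequence of bijections ℝ^N → ℝ^N, each continuously differentiable, such that δ_n := sup_{x ∈ ℝ^N} ( ‖h_n(x) − x‖ + ‖Dh_n(x) − Id‖ ) is finite for each n and δ_n → 0 as n → ∞. Then for every u ∈ L²(ℝ^N): ∫_{ℝ^N} |u(h_n(x)) − u(x)|² dx → 0 as n → ∞. (This is the analytic core of the paper's Lemma 3.1, establishing ‖j_{h_n} u − u‖_{L²(ℝ^N)} → 0 for compositions with diffeomorphisms C¹-converging to the identity.) -/

import Mathlib

open MeasureTheory Filter

open Metric Set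
open scoped NNReal ENNReal

lemma sq_add3_aux (a b c d : ℝ≥0) (h : a ≤ b + c + d) :
    (a : ℝ≥0∞) ^ 2 ≤ 3 * ((b : ℝ≥0∞) ^ 2 + (c : ℝ≥0∞) ^ 2 + (d : ℝ≥0∞) ^ 2) := by
  have h2 : a ^ 2 ≤ 3 * (b ^ 2 + c ^ 2 + d ^ 2) := by
    have h' : (a : ℝ) ≤ (b : ℝ) + c + d := by exact_mod_cast h
    have : (a : ℝ) ^ 2 ≤ 3 * ((b : ℝ) ^ 2 + (c : ℝ) ^ 2 + (d : ℝ) ^ 2) := by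
      nlinarith [a.coe_nonneg, b.coe_nonneg, c.coe_nonneg, d.coe_nonneg, sq_nonneg ((b:ℝ) - c), sq_nonneg ((b:ℝ) - d), sq_nonneg ((c:ℝ) - d), mul_self_nonneg ((a:ℝ))]
    exact_mod_cast this
  exact_mod_cast h2
lemma det_lower_aux {N : ℕ} (hN : 1 ≤ N)
    (A : EuclideanSpace ℝ (Fin N) →L[ℝ] EuclideanSpace ℝ (Fin N)) {d : ℝ} (hd1 : d < 1)
    (hA : ‖A - ContinuousLinearMap.id ℝ (EuclideanSpace ℝ (Fin N))‖ ≤ d) :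
    (1 - d) ^ N ≤ |LinearMap.det (A : EuclideanSpace ℝ (Fin N) →ₗ[ℝ] EuclideanSpace ℝ (Fin N))| := by
  haveI : Nontrivial (EuclideanSpace ℝ (Fin N)) :=
    Module.nontrivial_of_finrank_pos (R := ℝ) (by rw [finrank_euclideanSpace_fin]; omega)
  have hd0 : 0 ≤ d := le_trans (norm_nonneg _) hA
  have hlow : ∀ x, (1 - d) * ‖x‖ ≤ ‖A x‖ := by
    intro x
    have h1 : ‖A x - x‖ ≤ d * ‖x‖ := by
      have := (A - ContinuousLinearMap.id ℝ _).le_opNorm x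
      simpa using this.trans (mul_le_mul_of_nonneg_right hA (norm_nonneg x))
    have h2 : ‖x‖ - ‖A x‖ ≤ ‖A x - x‖ := by
      rw [norm_sub_rev]; exact norm_sub_norm_le x (A x)
    nlinarith [norm_nonneg x]
  have hU : IsUnit A := by
    have h1 : ‖(1 : EuclideanSpace ℝ (Fin N) →L[ℝ] EuclideanSpace ℝ (Fin N)) - A‖ < 1 := by
      rw [norm_sub_rev]
      exact lt_of_le_of_lt hA hd1
    have := (Units.oneSub ((1 : EuclideanSpace ℝ (Fin N) →L[ℝ] EuclideanSpace ℝ (Fin N)) - A) h1).isUnit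
    simpa using this
  obtain ⟨Au, hAu⟩ := hU
  have hmul : A * (↑Au⁻¹ : EuclideanSpace ℝ (Fin N) →L[ℝ] EuclideanSpace ℝ (Fin N)) = 1 := by
    rw [← hAu]; exact Au.mul_inv
  have happ : ∀ y, A ((↑Au⁻¹ : EuclideanSpace ℝ (Fin N) →L[ℝ] EuclideanSpace ℝ (Fin N)) y) = y := by
    intro y
    calc A ((↑Au⁻¹ : EuclideanSpace ℝ (Fin N) →L[ℝ] EuclideanSpace ℝ (Fin N)) y)
        = (A * (↑Au⁻¹ : EuclideanSpace ℝ (Fin N) →L[ℝ] EuclideanSpace ℝ (Fin N))) y := rfl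
      _ = y := by rw [hmul]; rfl
  have hball : ball (0 : EuclideanSpace ℝ (Fin N)) (1 - d) ⊆ A '' ball 0 1 := by
    intro y hy
    rw [mem_ball_zero_iff] at hy
    refine ⟨(↑Au⁻¹ : EuclideanSpace ℝ (Fin N) →L[ℝ] EuclideanSpace ℝ (Fin N)) y, ?_, happ y⟩
    rw [mem_ball_zero_iff]
    have := hlow ((↑Au⁻¹ : EuclideanSpace ℝ (Fin N) →L[ℝ] EuclideanSpace ℝ (Fin N)) y)
    rw [happ y] at this
    nlinarith
  have hmeas := measure_mono (μ := (volume : Measure (EuclideanSpace ℝ (Fin N)))) hball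
  rw [Measure.addHaar_image_continuousLinearMap,
    Measure.addHaar_ball _ _ (by linarith : (0:ℝ) ≤ 1 - d)] at hmeas
  rw [finrank_euclideanSpace_fin] at hmeas
  have hb0 : (volume : Measure (EuclideanSpace ℝ (Fin N))) (ball 0 1) ≠ 0 :=
    (measure_ball_pos _ _ one_pos).ne'
  have hbt : (volume : Measure (EuclideanSpace ℝ (Fin N))) (ball 0 1) ≠ ⊤ :=
    measure_ball_lt_top.ne
  rw [ENNReal.mul_le_mul_iff_left hb0 hbt] at hmeas
  exact (ENNReal.ofReal_le_ofReal_iff (abs_nonneg _)).mp hmeas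
lemma cov_aux {N : ℕ} (hN : 1 ≤ N) {h : EuclideanSpace ℝ (Fin N) → EuclideanSpace ℝ (Fin N)}
    (hbij : Function.Bijective h) (hdiff : Differentiable ℝ h)
    {d : ℝ} (hd : d ≤ 1/2)
    (hder : ∀ x, ‖fderiv ℝ h x - ContinuousLinearMap.id ℝ (EuclideanSpace ℝ (Fin N))‖ ≤ d)
    (g : EuclideanSpace ℝ (Fin N) → ℝ≥0∞) :
    ∫⁻ x, g (h x) ≤ 2 ^ N * ∫⁻ x, g x := by
  have hfd : ∀ x ∈ univ, HasFDerivWithinAt h (fderiv ℝ h x) univ x :=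
    fun x _ => (hdiff x).hasFDerivAt.hasFDerivWithinAt
  have hcv := lintegral_image_eq_lintegral_abs_det_fderiv_mul volume MeasurableSet.univ hfd
    (hbij.1.injOn) g
  rw [image_univ_of_surjective hbij.2, Measure.restrict_univ] at hcv
  have hdet : ∀ x, ENNReal.ofReal ((2:ℝ)⁻¹ ^ N) ≤ ENNReal.ofReal |(fderiv ℝ h x).det| := by
    intro x
    apply ENNReal.ofReal_le_ofReal
    calc ((2:ℝ)⁻¹) ^ N ≤ (1 - d) ^ N := by
          apply pow_le_pow_left₀ (by norm_num)
          linarith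
      _ ≤ _ := det_lower_aux hN _ (by linarith) (hder x)
  have hconst : ENNReal.ofReal ((2:ℝ)⁻¹ ^ N) * ∫⁻ x, g (h x) ≤ ∫⁻ x, g x := by
    rw [← lintegral_const_mul' _ _ ENNReal.ofReal_ne_top, hcv]
    exact lintegral_mono fun x => mul_le_mul_left (hdet x) _
  have hc : ENNReal.ofReal ((2:ℝ)⁻¹ ^ N) = ((2:ℝ≥0∞) ^ N)⁻¹ := by
    rw [ENNReal.ofReal_pow (by norm_num), ENNReal.ofReal_inv_of_pos (by norm_num),
      ← ENNReal.inv_pow]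
    norm_num
  rw [hc] at hconst
  exact (ENNReal.inv_mul_le_iff (by positivity) (by simp)).mp hconst
lemma q_aux {N : ℕ} (h : ℕ → EuclideanSpace ℝ (Fin N) → EuclideanSpace ℝ (Fin N)) (δ : ℕ → ℝ)
    (hdist : ∀ n x, ‖h n x - x‖ ≤ δ n) (hδ0 : Tendsto δ atTop (nhds 0))
    (v : EuclideanSpace ℝ (Fin N) → ℝ) (v_cont : Continuous v) (v_supp : HasCompactSupport v) :
    Tendsto (fun n => ∫⁻ x, (‖v (h n x) - v x‖₊ : ℝ≥0∞) ^ 2) atTop (nhds 0) := by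
  obtain ⟨R₀, hR₀⟩ := v_supp.isBounded.subset_closedBall 0
  set R : ℝ := max R₀ 0 with hRdef
  have hR : tsupport v ⊆ closedBall 0 R :=
    hR₀.trans (closedBall_subset_closedBall (le_max_left _ _))
  have hR0 : (0:ℝ) ≤ R := le_max_right _ _
  set B' : Set (EuclideanSpace ℝ (Fin N)) := closedBall 0 (R + 1) with hB'def
  have hvol : volume B' ≠ ∞ := measure_closedBall_lt_top.ne
  have uc := v_supp.uniformContinuous_of_continuous v_cont
  rw [ENNReal.tendsto_nhds_zero]
  intro ε hε
  set r : ℝ≥0∞ := min ε 1 / (volume B' + 1) with hrdef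
  have hr0 : r ≠ 0 := by
    apply (ENNReal.div_pos (by simp [lt_min hε one_pos, (lt_min hε one_pos).ne']) ?_).ne'
    exact ENNReal.add_ne_top.mpr ⟨hvol, ENNReal.one_ne_top⟩
  have hrt : r ≠ ∞ := (ENNReal.div_lt_top (by simp) (by simp)).ne
  set ε₂ : ℝ := Real.sqrt r.toReal with hε₂def
  have hε₂ : 0 < ε₂ := Real.sqrt_pos.mpr (ENNReal.toReal_pos hr0 hrt)
  obtain ⟨d', hd', H⟩ := Metric.uniformContinuous_iff.mp uc ε₂ hε₂
  filter_upwards [hδ0.eventually_lt_const (show (0:ℝ) < min d' 1 from lt_min hd' one_pos)]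
    with n hn
  have ptwise : ∀ x, (‖v (h n x) - v x‖₊ : ℝ≥0∞) ^ 2 ≤
      B'.indicator (fun _ => ENNReal.ofReal (ε₂ ^ 2)) x := by
    intro x
    by_cases hx : x ∈ B'
    · rw [Set.indicator_of_mem hx]
      have hd1 : dist (h n x) x < d' := by
        rw [dist_eq_norm]
        exact lt_of_le_of_lt (hdist n x) (lt_of_lt_of_le hn (min_le_left _ _))
      have hvv : ‖v (h n x) - v x‖ ≤ ε₂ := by
        have := H hd1
        rw [Real.dist_eq] at this
        rw [Real.norm_eq_abs]
        linarith
      have heq : (‖v (h n x) - v x‖₊ : ℝ≥0∞) ^ 2 = ENNReal.ofReal (‖v (h n x) - v x‖ ^ 2) := by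
        rw [ENNReal.ofReal_pow (norm_nonneg _), ofReal_norm, enorm_eq_nnnorm]
      rw [heq]
      exact ENNReal.ofReal_le_ofReal (pow_le_pow_left₀ (norm_nonneg _) hvv 2)
    · have hx' : R + 1 < ‖x‖ := by
        rw [hB'def, mem_closedBall_zero_iff] at hx
        linarith [not_le.mp hx]
      have hvx : v x = 0 := by
        apply image_eq_zero_of_notMem_tsupport
        intro hmem
        have := mem_closedBall_zero_iff.mp (hR hmem)
        linarith
      have hvhx : v (h n x) = 0 := by
        apply image_eq_zero_of_notMem_tsupport
        intro hmem
        have h1 := mem_closedBall_zero_iff.mp (hR hmem)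
        have h2 : ‖x‖ - ‖h n x‖ ≤ ‖h n x - x‖ := by
          rw [norm_sub_rev]
          exact norm_sub_norm_le _ _
        have h3 : ‖h n x - x‖ ≤ δ n := hdist n x
        have h4 : δ n < 1 := lt_of_lt_of_le hn (min_le_right _ _)
        linarith
      rw [hvx, hvhx]
      simpa using zero_le _
  calc ∫⁻ x, (‖v (h n x) - v x‖₊ : ℝ≥0∞) ^ 2
      ≤ ∫⁻ x, B'.indicator (fun _ => ENNReal.ofReal (ε₂ ^ 2)) x := lintegral_mono ptwise
    _ = ENNReal.ofReal (ε₂ ^ 2) * volume B' := lintegral_indicator_const measurableSet_closedBall _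
    _ = r * volume B' := by
        rw [hε₂def, Real.sq_sqrt ENNReal.toReal_nonneg, ENNReal.ofReal_toReal hrt]
    _ ≤ r * (volume B' + 1) := mul_le_mul_right le_self_add _
    _ = min ε 1 := ENNReal.div_mul_cancel (by simp) (ENNReal.add_ne_top.mpr ⟨hvol, ENNReal.one_ne_top⟩)
    _ ≤ ε := min_le_left _ _

/-- The analytic core of Lemma 3.1 of the paper: `‖u ∘ hₙ − u‖_{L²(ℝ^N)} → 0` for
compositions with diffeomorphisms `C¹`-converging to the identity. -/
theorem stmt9 (N : ℕ) (hN : 1 ≤ N)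
    (h : ℕ → EuclideanSpace ℝ (Fin N) → EuclideanSpace ℝ (Fin N))
    (hbij : ∀ n, Function.Bijective (h n))
    (hC1 : ∀ n, ContDiff ℝ 1 (h n))
    (δ : ℕ → ℝ)
    (hδ : ∀ n x, ‖h n x - x‖ +
      ‖fderiv ℝ (h n) x - ContinuousLinearMap.id ℝ (EuclideanSpace ℝ (Fin N))‖ ≤ δ n)
    (hδ0 : Tendsto δ atTop (nhds 0))
    (u : EuclideanSpace ℝ (Fin N) → ℝ) (hu : MemLp u 2 volume) :
    Tendsto (fun n => ∫ x, |u (h n x) - u x| ^ 2) atTop (nhds 0) := by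
  have hdiff : ∀ n, Differentiable ℝ (h n) := fun n => (hC1 n).differentiable (by norm_num)
  have hdist : ∀ n x, ‖h n x - x‖ ≤ δ n := fun n x =>
    le_trans (le_add_of_nonneg_right (norm_nonneg _)) (hδ n x)
  have hder : ∀ n x, ‖fderiv ℝ (h n) x - ContinuousLinearMap.id ℝ (EuclideanSpace ℝ (Fin N))‖ ≤ δ n :=
    fun n x => le_trans (le_add_of_nonneg_left (norm_nonneg _)) (hδ n x)
  have hmeas : ∀ n, Measurable (h n) := fun n => (hC1 n).continuous.measurable
  -- absolute continuity of the pushforward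
  have hac : ∀ n, δ n ≤ 1/2 → (volume.map (h n)) ≪ (volume : Measure (EuclideanSpace ℝ (Fin N))) := by
    intro n hn
    refine Measure.AbsolutelyContinuous.mk (fun s hs hs0 => ?_)
    rw [Measure.map_apply (hmeas n) hs]
    have hkey := cov_aux hN (hbij n) (hdiff n) hn (hder n) (s.indicator 1)
    have hl : ∫⁻ x, s.indicator 1 (h n x) = volume (h n ⁻¹' s) := by
      have hfun : ∀ x, s.indicator (1 : EuclideanSpace ℝ (Fin N) → ℝ≥0∞) (h n x)
          = (h n ⁻¹' s).indicator 1 x := by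
        intro x
        by_cases hx : h n x ∈ s <;> simp [Set.indicator_apply, hx]
      simp only [hfun]
      exact lintegral_indicator_one (hs.preimage (hmeas n))
    rw [hl] at hkey
    rw [lintegral_indicator_one hs, hs0, mul_zero] at hkey
    exact le_antisymm hkey zero_le
  have hcomp : ∀ n, δ n ≤ 1/2 → ∀ w : EuclideanSpace ℝ (Fin N) → ℝ, AEMeasurable w volume →
      AEMeasurable (fun x => w (h n x)) volume :=
    fun n hn w hw => (hw.mono_ac (hac n hn)).comp_measurable (hmeas n)
  -- main ENNReal statement
  have hmain : Tendsto (fun n => ∫⁻ x, (‖u (h n x) - u x‖₊ : ℝ≥0∞) ^ 2) atTop (nhds 0) := by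
    rw [ENNReal.tendsto_nhds_zero]
    intro ε hε
    set k : ℝ≥0∞ := 2 ^ N with hkdef
    have hk0 : k ≠ 0 := by positivity
    have hkt : k ≠ ∞ := by simp [hkdef]
    set c : ℝ≥0∞ := 3 * (k + 1) with hcdef
    have hc0 : c ≠ 0 := by simp [hcdef]
    have hct : c ≠ ∞ := by
      rw [hcdef]
      exact ENNReal.mul_ne_top (by norm_num) (ENNReal.add_ne_top.mpr ⟨hkt, ENNReal.one_ne_top⟩)
    set m := min ε 1 with hm
    have hm0 : m ≠ 0 := (lt_min hε one_pos).ne'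
    have hmt : m ≠ ∞ := (lt_of_le_of_lt (min_le_right _ _) ENNReal.one_lt_top).ne
    set ε₁ : ℝ≥0∞ := (m / (2 * c)) ^ (1/2 : ℝ) with hε₁def
    have h2c0 : (2 : ℝ≥0∞) * c ≠ 0 := by simp [hc0]
    have h2ct : (2 : ℝ≥0∞) * c ≠ ∞ := ENNReal.mul_ne_top (by norm_num) hct
    have hε₁0 : ε₁ ≠ 0 := by
      rw [hε₁def]
      apply (ENNReal.rpow_pos (ENNReal.div_pos hm0 h2ct) ?_).ne'
      exact (ENNReal.div_lt_top hmt h2c0).ne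
    obtain ⟨v, v_supp, huv, v_cont, v_mem⟩ :=
      hu.exists_hasCompactSupport_eLpNorm_sub_le (by norm_num : (2:ℝ≥0∞) ≠ ∞) hε₁0
    -- η bound
    have hη : ∫⁻ x, (‖u x - v x‖₊ : ℝ≥0∞) ^ 2 ≤ m / (2 * c) := by
      have h2 : (eLpNorm (u - v) 2 volume) ^ 2 = ∫⁻ x, (‖u x - v x‖₊ : ℝ≥0∞) ^ 2 := by
        rw [eLpNorm_eq_lintegral_rpow_enorm_toReal two_ne_zero ENNReal.ofNat_ne_top]
        rw [← ENNReal.rpow_natCast _ 2, ← ENNReal.rpow_mul]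
        norm_num
        rfl
      calc ∫⁻ x, (‖u x - v x‖₊ : ℝ≥0∞) ^ 2 = (eLpNorm (u - v) 2 volume) ^ 2 := h2.symm
        _ ≤ ε₁ ^ 2 := pow_le_pow_left' huv 2
        _ = m / (2 * c) := by
            rw [hε₁def, ← ENNReal.rpow_natCast _ 2, ← ENNReal.rpow_mul]
            norm_num
    have hev3 : ∀ᶠ n in atTop, δ n ≤ 1/2 :=
      (hδ0.eventually_lt_const (by norm_num : (0:ℝ) < 1/2)).mono fun n hn => hn.le
    have hQsmall : ∀ᶠ n in atTop, ∫⁻ x, (‖v (h n x) - v x‖₊ : ℝ≥0∞) ^ 2 ≤ m / 6 :=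
      (ENNReal.tendsto_nhds_zero.mp (q_aux h δ hdist hδ0 v v_cont v_supp)) _
        (ENNReal.div_pos hm0 (by norm_num))
    filter_upwards [hev3, hQsmall] with n hn hQn
    have hpt : ∀ x, (‖u (h n x) - u x‖₊ : ℝ≥0∞) ^ 2 ≤
        3 * ((‖u (h n x) - v (h n x)‖₊ : ℝ≥0∞) ^ 2 + (‖v (h n x) - v x‖₊ : ℝ≥0∞) ^ 2 +
          (‖v x - u x‖₊ : ℝ≥0∞) ^ 2) := by
      intro x
      apply sq_add3_aux
      have hsplit : u (h n x) - u x =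
          (u (h n x) - v (h n x)) + (v (h n x) - v x) + (v x - u x) := by ring
      rw [hsplit]
      exact le_trans (nnnorm_add_le _ _) (add_le_add_left (nnnorm_add_le _ _) _)
    -- measurability
    have hg : AEMeasurable (fun x => (‖v (h n x) - v x‖₊ : ℝ≥0∞) ^ 2) volume := by
      have : Continuous (fun x => v (h n x) - v x) := (v_cont.comp (hC1 n).continuous).sub v_cont
      exact ((this.measurable.nnnorm.coe_nnreal_ennreal).pow_const 2).aemeasurable
    have hkmeas : AEMeasurable (fun x => (‖v x - u x‖₊ : ℝ≥0∞) ^ 2) volume := by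
      have : AEMeasurable (fun x => v x - u x) volume :=
        v_cont.measurable.aemeasurable.sub hu.1.aemeasurable
      exact (this.nnnorm.coe_nnreal_ennreal).pow_const 2
    have hint : ∫⁻ x, (‖u (h n x) - u x‖₊ : ℝ≥0∞) ^ 2 ≤
        3 * ((∫⁻ x, (‖u (h n x) - v (h n x)‖₊ : ℝ≥0∞) ^ 2)
          + (∫⁻ x, (‖v (h n x) - v x‖₊ : ℝ≥0∞) ^ 2)
          + ∫⁻ x, (‖v x - u x‖₊ : ℝ≥0∞) ^ 2) := by
      calc ∫⁻ x, (‖u (h n x) - u x‖₊ : ℝ≥0∞) ^ 2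
          ≤ ∫⁻ x, 3 * ((‖u (h n x) - v (h n x)‖₊ : ℝ≥0∞) ^ 2 + (‖v (h n x) - v x‖₊ : ℝ≥0∞) ^ 2 +
              (‖v x - u x‖₊ : ℝ≥0∞) ^ 2) := lintegral_mono hpt
        _ = 3 * ∫⁻ x, ((‖u (h n x) - v (h n x)‖₊ : ℝ≥0∞) ^ 2 + (‖v (h n x) - v x‖₊ : ℝ≥0∞) ^ 2 +
              (‖v x - u x‖₊ : ℝ≥0∞) ^ 2) := lintegral_const_mul' _ _ (by norm_num)
        _ = _ := by
            rw [lintegral_add_right' _ hkmeas, lintegral_add_right' _ hg]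
    have hP : ∫⁻ x, (‖u (h n x) - v (h n x)‖₊ : ℝ≥0∞) ^ 2 ≤ k * ∫⁻ x, (‖u x - v x‖₊ : ℝ≥0∞) ^ 2 :=
      cov_aux hN (hbij n) (hdiff n) hn (hder n) (fun y => (‖u y - v y‖₊ : ℝ≥0∞) ^ 2)
    have hsym : ∫⁻ x, (‖v x - u x‖₊ : ℝ≥0∞) ^ 2 = ∫⁻ x, (‖u x - v x‖₊ : ℝ≥0∞) ^ 2 := by
      apply lintegral_congr fun x => ?_
      rw [← neg_sub, nnnorm_neg]
    calc ∫⁻ x, (‖u (h n x) - u x‖₊ : ℝ≥0∞) ^ 2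
        ≤ 3 * ((∫⁻ x, (‖u (h n x) - v (h n x)‖₊ : ℝ≥0∞) ^ 2)
          + (∫⁻ x, (‖v (h n x) - v x‖₊ : ℝ≥0∞) ^ 2)
          + ∫⁻ x, (‖v x - u x‖₊ : ℝ≥0∞) ^ 2) := hint
      _ ≤ 3 * (k * (m / (2 * c)) + m / 6 + m / (2 * c)) := by
          gcongr
          · exact hP.trans (by gcongr)
          · rw [hsym]; exact hη
      _ = c * (m / (2 * c)) + 3 * (m / 6) := by rw [hcdef]; ring
      _ = m / 2 + m / 2 := by
          congr 1
          · rw [mul_comm (2:ℝ≥0∞) c, ← ENNReal.mul_div_mul_left m 2 hc0 hct,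
              div_eq_mul_inv, div_eq_mul_inv, hcdef]
            ring
          · rw [(by norm_num : (6:ℝ≥0∞) = 3 * 2),
              ← ENNReal.mul_div_mul_left (c := (3:ℝ≥0∞)) m 2 (by norm_num) (by norm_num),
              div_eq_mul_inv, div_eq_mul_inv]
            ring
      _ = m := ENNReal.add_halves m
      _ ≤ ε := min_le_left _ _
  -- back to real integrals
  have hev : ∀ᶠ n in atTop, δ n ≤ 1/2 :=
    (hδ0.eventually_lt_const (by norm_num : (0:ℝ) < 1/2)).mono fun n hn => hn.le
  apply squeeze_zero' (Eventually.of_forall fun n => integral_nonneg fun x => by positivity)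
    ?_ (show Tendsto (fun n => (∫⁻ x, (‖u (h n x) - u x‖₊ : ℝ≥0∞) ^ 2).toReal) atTop (nhds 0) by
      exact (ENNReal.tendsto_toReal (by simp)).comp hmain)
  filter_upwards [hev] with n hn
  have ham : AEMeasurable (fun x => u (h n x) - u x) volume :=
    (hcomp n hn u hu.1.aemeasurable).sub hu.1.aemeasurable
  have heq : ∫ x, |u (h n x) - u x| ^ 2 = (∫⁻ x, (‖u (h n x) - u x‖₊ : ℝ≥0∞) ^ 2).toReal := by
    rw [integral_eq_lintegral_of_nonneg_ae (Eventually.of_forall fun x => by positivity)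
      (by simpa [← Real.norm_eq_abs] using (ham.norm.pow_const 2).aestronglyMeasurable)]
    congr 1
    apply lintegral_congr fun x => ?_
    rw [ENNReal.ofReal_pow (abs_nonneg _)]
    congr 1
    rw [← Real.norm_eq_abs, ofReal_norm, enorm_eq_nnnorm]
  rw [heq]
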